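/- arXiv:2311.15381 — 3 statements merged into one kernel-verified Lean document; each statement's English description precedes it below -/
import Mathlib

section
/- Let G be a transition graph with n ≥ 1 vertices, let ε > 0 be a real number, and suppose F(G) has the ε-separability property. Then for every natural number p with ε·p ≥ 6, the number of sets S ∈ F(G) with |S| = p is at most n^(3/ε) (real power). -/
structure TransitionGraph (V E U : Type*) where
  src : E → V
  tgt : E → V
  s : V
  t : V
  lab : E → Option U

namespace TransitionGraph

variable {V E U : Type*}

def IsSTPath (G : TransitionGraph V E U) (P : List E) : Prop :=
  List.Chain' (fun e f => G.tgt e = G.src f) P ∧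
    ((P = [] ∧ G.s = G.t) ∨
      ∃ h : P ≠ [], G.src (P.head h) = G.s ∧ G.tgt (P.getLast h) = G.t)

def labelSet [DecidableEq U] (G : TransitionGraph V E U) (P : List E) : Finset U :=
  (P.filterMap G.lab).toFinset

def labelFamily [DecidableEq U] (G : TransitionGraph V E U) : Set (Finset U) :=
  {S | ∃ P : List E, G.IsSTPath P ∧ G.labelSet P = S}

end TransitionGraph

/-- The `ε`-separability property for a family of finite sets. -/
def SepProperty {α : Type*} [DecidableEq α] (ε : ℝ) (F : Set (Finset α)) : Prop :=
  ∀ S₁ ∈ F, ∀ S₂ ∈ F, S₁ ≠ S₂ →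
    (6 : ℝ) ≤ ε * (max S₁.card S₂.card : ℕ) →
    ε * (max S₁.card S₂.card : ℕ) < ((symmDiff S₁ S₂).card : ℝ)

namespace TransitionGraph

variable {V E U : Type*}

/-- Walks in a transition graph from `u` to `w`. -/
inductive Walk (G : TransitionGraph V E U) : V → V → List E → Prop
  | nil (v : V) : Walk G v v []
  | cons {u w x : V} {e : E} {l : List E} (h1 : G.src e = u) (h2 : G.tgt e = x)
      (hl : Walk G x w l) : Walk G u w (e :: l)

lemma walk_nil_iff {G : TransitionGraph V E U} {u w : V} : Walk G u w [] ↔ u = w := by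
  constructor
  · rintro ⟨⟩; rfl
  · rintro rfl; exact Walk.nil u

lemma walk_cons_iff {G : TransitionGraph V E U} {u w : V} {e : E} {l : List E} :
    Walk G u w (e :: l) ↔ G.src e = u ∧ Walk G (G.tgt e) w l := by
  constructor
  · intro h
    cases h with
    | cons h1 h2 hl => exact ⟨h1, by rwa [h2]⟩
  · rintro ⟨h1, h2⟩; exact Walk.cons h1 rfl h2

lemma walk_append {G : TransitionGraph V E U} {u v w : V} {l₁ l₂ : List E}
    (h1 : Walk G u v l₁) (h2 : Walk G v w l₂) : Walk G u w (l₁ ++ l₂) := by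
  induction l₁ generalizing u with
  | nil => rw [walk_nil_iff] at h1; rwa [h1, List.nil_append]
  | cons e l ih =>
    rw [walk_cons_iff] at h1
    exact Walk.cons h1.1 rfl (ih h1.2)

lemma walk_append_inv {G : TransitionGraph V E U} {u w : V} {l₁ l₂ : List E}
    (h : Walk G u w (l₁ ++ l₂)) : ∃ v, Walk G u v l₁ ∧ Walk G v w l₂ := by
  induction l₁ generalizing u with
  | nil => exact ⟨u, Walk.nil u, h⟩
  | cons e l ih =>
    rw [List.cons_append, walk_cons_iff] at h
    obtain ⟨v, hv1, hv2⟩ := ih h.2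
    exact ⟨v, Walk.cons h.1 rfl hv1, hv2⟩

lemma walk_end_unique {G : TransitionGraph V E U} {u v v' : V} {l : List E}
    (h : Walk G u v l) (h' : Walk G u v' l) : v = v' := by
  induction l generalizing u with
  | nil => rw [walk_nil_iff] at h h'; rw [← h, h']
  | cons e l ih =>
    rw [walk_cons_iff] at h h'
    exact ih h.2 h'.2

lemma isSTPath_iff_walk {G : TransitionGraph V E U} {P : List E} :
    G.IsSTPath P ↔ Walk G G.s G.t P := by
  suffices h : ∀ (P : List E) (u w : V),
      (List.Chain' (fun e f => G.tgt e = G.src f) P ∧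
        ((P = [] ∧ u = w) ∨
          ∃ h : P ≠ [], G.src (P.head h) = u ∧ G.tgt (P.getLast h) = w)) ↔ Walk G u w P by
    exact h P G.s G.t
  intro P
  induction P with
  | nil =>
    intro u w
    simp [walk_nil_iff, List.Chain', List.isChain_nil]
  | cons e l ih =>
    intro u w
    rw [walk_cons_iff, ← ih (G.tgt e) w]
    constructor
    · rintro ⟨hch, hrest⟩
      rcases hrest with ⟨habs, -⟩ | ⟨hne, h1, h2⟩
      · exact absurd habs (List.cons_ne_nil _ _)
      · have h1' : G.src e = u := by simpa using h1
        refine ⟨h1', (List.isChain_cons.mp hch).2, ?_⟩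
        cases l with
        | nil => exact Or.inl ⟨rfl, by simpa using h2⟩
        | cons f l' =>
          refine Or.inr ⟨List.cons_ne_nil _ _, ?_, ?_⟩
          · have := (List.isChain_cons_cons.mp hch).1
            simpa using this.symm
          · rw [List.getLast_cons (List.cons_ne_nil _ _)] at h2
            exact h2
    · rintro ⟨h1, hch, hrest⟩
      rcases hrest with ⟨rfl, h2⟩ | ⟨hne, h3, h4⟩
      · refine ⟨List.isChain_singleton e, Or.inr ⟨List.cons_ne_nil _ _, by simpa using h1, ?_⟩⟩
        simpa using h2
      · refine ⟨?_, Or.inr ⟨List.cons_ne_nil _ _, by simpa using h1, ?_⟩⟩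
        · refine List.isChain_cons.mpr ⟨?_, hch⟩
          intro y hy
          rw [List.head?_eq_head hne] at hy
          simp only [Option.mem_def, Option.some.injEq] at hy
          rw [hy] at h3
          exact h3.symm
        · rw [List.getLast_cons hne]
          exact h4

section Labels

open Classical

variable [DecidableEq U] (G : TransitionGraph V E U)

lemma labelSet_append (l₁ l₂ : List E) :
    G.labelSet (l₁ ++ l₂) = G.labelSet l₁ ∪ G.labelSet l₂ := by
  simp [labelSet, List.filterMap_append]

lemma labelSet_nil : G.labelSet ([] : List E) = ∅ := rfl

lemma labelSet_take_subset (A : List E) (c : ℕ) : G.labelSet (A.take c) ⊆ G.labelSet A := by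
  conv_rhs => rw [← List.take_append_drop c A]
  rw [labelSet_append]
  exact Finset.subset_union_left

lemma labelSet_drop_subset (A : List E) (c : ℕ) : G.labelSet (A.drop c) ⊆ G.labelSet A := by
  conv_rhs => rw [← List.take_append_drop c A]
  rw [labelSet_append]
  exact Finset.subset_union_right

lemma labelSet_take_mono (A : List E) {c c' : ℕ} (h : c ≤ c') :
    G.labelSet (A.take c) ⊆ G.labelSet (A.take c') := by
  have : A.take c = (A.take c').take c := by rw [List.take_take, min_eq_left h]
  rw [this]
  exact labelSet_take_subset G _ c

/-- the prefix label-count function -/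
def gfun (A : List E) (c : ℕ) : ℕ := (G.labelSet (A.take c)).card

lemma gfun_zero (A : List E) : gfun G A 0 = 0 := by simp [gfun, labelSet]

lemma gfun_mono (A : List E) {c c' : ℕ} (h : c ≤ c') : gfun G A c ≤ gfun G A c' :=
  Finset.card_le_card (labelSet_take_mono G A h)

lemma gfun_succ_le (A : List E) (c : ℕ) : gfun G A (c + 1) ≤ gfun G A c + 1 := by
  unfold gfun
  rw [List.take_succ, labelSet_append]
  refine le_trans (Finset.card_union_le _ _) ?_
  have : (G.labelSet A[c]?.toList).card ≤ 1 := by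
    cases h : A[c]? with
    | none => simp [labelSet]
    | some e =>
      simp only [Option.toList_some]
      unfold labelSet
      cases he : G.lab e with
      | none => simp [List.filterMap, he]
      | some x => simp [List.filterMap, he]
  omega

/-- the `v`-th checkpoint of a path: least `c` with `v ≤ gfun A c` -/
noncomputable def chk (A : List E) (v : ℕ) : ℕ :=
  if h : ∃ c, v ≤ gfun G A c then Nat.find h else 0

lemma chk_spec (A : List E) (v : ℕ) (hv : v ≤ (G.labelSet A).card) :
    v ≤ gfun G A (chk G A v) := by
  classical
  have hex : ∃ c, v ≤ gfun G A c := ⟨A.length, by simpa [gfun] using hv⟩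
  rw [chk, dif_pos hex]
  exact Nat.find_spec hex

lemma chk_eq_exact (A : List E) (v : ℕ) (hv : v ≤ (G.labelSet A).card) :
    gfun G A (chk G A v) = v := by
  classical
  have hex : ∃ c, v ≤ gfun G A c := ⟨A.length, by simpa [gfun] using hv⟩
  have hle : v ≤ gfun G A (chk G A v) := chk_spec G A v hv
  rw [chk, dif_pos hex] at hle ⊢
  rcases h0 : Nat.find hex with _ | c
  · rw [h0] at hle
    have := gfun_zero G A
    omega
  · have hmin : ¬ (v ≤ gfun G A c) := Nat.find_min hex (by omega)
    have hsucc := gfun_succ_le G A c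
    rw [h0] at hle
    omega

lemma chk_zero (A : List E) : chk G A 0 = 0 := by
  classical
  have hex : ∃ c, 0 ≤ gfun G A c := ⟨0, Nat.zero_le _⟩
  rw [chk, dif_pos hex]
  simp

lemma chk_mono (A : List E) {v v' : ℕ} (h : v ≤ v') (hv' : v' ≤ (G.labelSet A).card) :
    chk G A v ≤ chk G A v' := by
  classical
  have hex' : ∃ c, v' ≤ gfun G A c := ⟨A.length, by simpa [gfun] using hv'⟩
  have hex : ∃ c, v ≤ gfun G A c := ⟨A.length, le_trans h (by simpa [gfun] using hv')⟩
  rw [chk, chk, dif_pos hex, dif_pos hex']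
  exact Nat.find_min' hex (le_trans h (Nat.find_spec hex'))

lemma labelSet_take_chk_card (A : List E) (v : ℕ) (hv : v ≤ (G.labelSet A).card) :
    (G.labelSet (A.take (chk G A v))).card = v :=
  chk_eq_exact G A v hv

/-- vertex at a cut position of an s-t walk -/
noncomputable def vert (A : List E) (c : ℕ) : V :=
  if h : ∃ x, Walk G G.s x (A.take c) ∧ Walk G x G.t (A.drop c) then h.choose else G.s

lemma vert_spec {A : List E} (hA : Walk G G.s G.t A) (c : ℕ) :
    Walk G G.s (vert G A c) (A.take c) ∧ Walk G (vert G A c) G.t (A.drop c) := by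
  have h : ∃ x, Walk G G.s x (A.take c) ∧ Walk G x G.t (A.drop c) := by
    have := hA
    rw [← List.take_append_drop c A] at this
    exact walk_append_inv this
  rw [vert, dif_pos h]
  exact h.choose_spec

/-- chosen path realizing a label set -/
noncomputable def pathOf (S : Finset U) : List E :=
  if h : S ∈ G.labelFamily then h.choose else []

lemma pathOf_spec {S : Finset U} (h : S ∈ G.labelFamily) :
    Walk G G.s G.t (G.pathOf S) ∧ G.labelSet (G.pathOf S) = S := by
  rw [pathOf, dif_pos h]
  exact ⟨isSTPath_iff_walk.mp h.choose_spec.1, h.choose_spec.2⟩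

end Labels

section Main

variable [DecidableEq U] {G : TransitionGraph V E U}

/-- The key one-sided invariant: if two s-t paths with label sets of size `p` have
matching checkpoint vertices, then every checkpoint-prefix label set of `A` is
contained in the label set of `B`. -/
lemma prefix_subset
    {ε : ℝ} (hε : 0 < ε) (hsep : SepProperty ε G.labelFamily)
    {p m K : ℕ} (hp6 : (6 : ℝ) ≤ ε * p)
    (h2m : 2 * (m : ℝ) ≤ ε * p) (hKm : K * m ≤ p)
    {A B : List E} (hA : Walk G G.s G.t A) (hB : Walk G G.s G.t B)
    (hSA : (G.labelSet A).card = p) (hSB : (G.labelSet B).card = p)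
    (hmatch : ∀ i, 1 ≤ i → i ≤ K →
      vert G A (chk G A (i * m)) = vert G B (chk G B (i * m))) :
    ∀ i, i ≤ K → G.labelSet (A.take (chk G A (i * m))) ⊆ G.labelSet B := by
  -- junction vertices
  have hjunction : ∀ i, i ≤ K → ∃ x,
      Walk G G.s x (A.take (chk G A (i * m))) ∧ Walk G x G.t (A.drop (chk G A (i * m))) ∧
      Walk G G.s x (B.take (chk G B (i * m))) ∧ Walk G x G.t (B.drop (chk G B (i * m))) := by
    intro i hi
    rcases Nat.eq_zero_or_pos i with rfl | hi1
    · refine ⟨G.s, ?_⟩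
      simp only [Nat.zero_mul, chk_zero, List.take_zero, List.drop_zero]
      exact ⟨Walk.nil _, hA, Walk.nil _, hB⟩
    · obtain ⟨h1, h2⟩ := vert_spec G hA (chk G A (i * m))
      obtain ⟨h3, h4⟩ := vert_spec G hB (chk G B (i * m))
      rw [← hmatch i hi1 hi] at h3 h4
      exact ⟨_, h1, h2, h3, h4⟩
  intro i
  induction i with
  | zero =>
    intro _
    simp [chk_zero, labelSet_nil]
  | succ i ih =>
    intro hiK
    have hi : i ≤ K := Nat.le_of_succ_le hiK
    have ihsub := ih hi
    -- notation
    set a := chk G A (i * m) with ha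
    set a' := chk G A ((i + 1) * m) with ha'
    set b := chk G B (i * m) with hb
    set b' := chk G B ((i + 1) * m) with hb'
    have himp : i * m ≤ p := le_trans (Nat.mul_le_mul_right m hi) hKm
    have hi1mp : (i + 1) * m ≤ p := le_trans (Nat.mul_le_mul_right m hiK) hKm
    have haa' : a ≤ a' := chk_mono G A (Nat.mul_le_mul_right m (Nat.le_succ i)) (by omega)
    have hbb' : b ≤ b' := chk_mono G B (Nat.mul_le_mul_right m (Nat.le_succ i)) (by omega)
    obtain ⟨x, hx1, hx2, hx3, hx4⟩ := hjunction i hi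
    obtain ⟨y, hy1, hy2, hy3, hy4⟩ := hjunction (i + 1) hiK
    -- decompose A.take a'
    have hdecompA : A.take a' = A.take a ++ (A.take a').drop a := by
      conv_lhs => rw [← List.take_append_drop a (A.take a')]
      rw [List.take_take, min_eq_left haa']
    -- middle walk
    obtain ⟨z, hz1, hz2⟩ : ∃ z, Walk G G.s z (A.take a) ∧ Walk G z y ((A.take a').drop a) := by
      rw [hdecompA] at hy1
      exact walk_append_inv hy1
    have hzx : z = x := walk_end_unique hz1 hx1
    rw [hzx] at hz2
    -- the hybrid walk
    set Y : List E := B.take b ++ ((A.take a').drop a ++ B.drop b') with hY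
    have hwalkY : Walk G G.s G.t Y := walk_append hx3 (walk_append hz2 hy4)
    have hYfam : G.labelSet Y ∈ G.labelFamily := ⟨Y, isSTPath_iff_walk.mpr hwalkY, rfl⟩
    have hBfam : G.labelSet B ∈ G.labelFamily := ⟨B, isSTPath_iff_walk.mpr hB, rfl⟩
    have hLSY : G.labelSet Y =
        G.labelSet (B.take b) ∪ (G.labelSet ((A.take a').drop a) ∪ G.labelSet (B.drop b')) := by
      rw [hY, labelSet_append, labelSet_append]
    have hLSA' : G.labelSet (A.take a') =
        G.labelSet (A.take a) ∪ G.labelSet ((A.take a').drop a) := by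
      conv_lhs => rw [hdecompA]
      rw [labelSet_append]
    have hLSB : G.labelSet B = G.labelSet (B.take b') ∪ G.labelSet (B.drop b') := by
      conv_lhs => rw [← List.take_append_drop b' B]
      rw [labelSet_append]
    -- subset bounds
    have hsub1 : G.labelSet Y \ G.labelSet B ⊆
        G.labelSet (A.take a') \ G.labelSet (A.take a) := by
      intro u hu
      rw [Finset.mem_sdiff] at hu ⊢
      obtain ⟨huY, huB⟩ := hu
      rw [hLSY] at huY
      rcases Finset.mem_union.mp huY with h | h
      · exact absurd (labelSet_take_subset G B b h) huB
      · rcases Finset.mem_union.mp h with h | h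
        · refine ⟨?_, fun hcon => huB (ihsub hcon)⟩
          rw [hLSA']
          exact Finset.mem_union_right _ h
        · exact absurd (labelSet_drop_subset G B b' h) huB
    have hsub2 : G.labelSet B \ G.labelSet Y ⊆
        G.labelSet (B.take b') \ G.labelSet (B.take b) := by
      intro u hu
      rw [Finset.mem_sdiff] at hu ⊢
      obtain ⟨huB, huY⟩ := hu
      have hnotdrop : u ∉ G.labelSet (B.drop b') := fun hcon =>
        huY (by rw [hLSY]; exact Finset.mem_union_right _ (Finset.mem_union_right _ hcon))
      have hnottake : u ∉ G.labelSet (B.take b) := fun hcon =>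
        huY (by rw [hLSY]; exact Finset.mem_union_left _ hcon)
      refine ⟨?_, hnottake⟩
      rw [hLSB] at huB
      rcases Finset.mem_union.mp huB with h | h
      · exact h
      · exact absurd h hnotdrop
    -- cardinality bounds
    have hcardA : (G.labelSet (A.take a') \ G.labelSet (A.take a)).card ≤ m := by
      rw [Finset.card_sdiff_of_subset (labelSet_take_mono G A haa')]
      rw [ha, ha', labelSet_take_chk_card G A _ (by omega), labelSet_take_chk_card G A _ (by omega)]
      have : (i + 1) * m = i * m + m := by ring
      omega
    have hcardB : (G.labelSet (B.take b') \ G.labelSet (B.take b)).card ≤ m := by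
      rw [Finset.card_sdiff_of_subset (labelSet_take_mono G B hbb')]
      rw [hb, hb', labelSet_take_chk_card G B _ (by omega), labelSet_take_chk_card G B _ (by omega)]
      have : (i + 1) * m = i * m + m := by ring
      omega
    have hsymm : ((symmDiff (G.labelSet Y) (G.labelSet B)).card : ℝ) ≤ 2 * m := by
      have h1 : (symmDiff (G.labelSet Y) (G.labelSet B)).card ≤ 2 * m := by
        rw [symmDiff_def]
        refine le_trans (Finset.card_union_le _ _) ?_
        have b1 := le_trans (Finset.card_le_card hsub1) hcardA
        have b2 := le_trans (Finset.card_le_card hsub2) hcardB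
        omega
      exact_mod_cast h1
    -- separability forces equality
    have hYB : G.labelSet Y = G.labelSet B := by
      by_contra hne
      have hmaxp : (p : ℝ) ≤ (max (G.labelSet Y).card (G.labelSet B).card : ℕ) := by
        have : p ≤ max (G.labelSet Y).card (G.labelSet B).card := hSB ▸ le_max_right _ _
        exact_mod_cast this
      have h6 : (6 : ℝ) ≤ ε * (max (G.labelSet Y).card (G.labelSet B).card : ℕ) :=
        le_trans hp6 (by nlinarith)
      have hlt := hsep _ hYfam _ hBfam hne h6
      nlinarith
    -- conclude
    intro u hu
    rw [hLSA'] at hu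
    rcases Finset.mem_union.mp hu with h | h
    · exact ihsub h
    · rw [← hYB, hLSY]
      exact Finset.mem_union_right _ (Finset.mem_union_left _ h)

end Main

end TransitionGraph

theorem stmt2 {V E U : Type*} [Fintype V] [Fintype E] [Fintype U] [DecidableEq U]
    (G : TransitionGraph V E U) (ε : ℝ) (hε : 0 < ε)
    (hn : 1 ≤ Fintype.card V)
    (hsep : SepProperty ε G.labelFamily)
    (p : ℕ) (hp : (6 : ℝ) ≤ ε * p) :
    ({S ∈ G.labelFamily | S.card = p}.ncard : ℝ) ≤ (Fintype.card V : ℝ) ^ ((3 : ℝ) / ε) := by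
  classical
  open TransitionGraph in
  -- p is positive
  have hp0 : 0 < p := by
    by_contra h
    push_neg at h
    interval_cases p
    simp at hp
    linarith
  set m : ℕ := ⌈ε * p / 3⌉₊ with hm
  have hm_low : ε * p / 3 ≤ (m : ℝ) := Nat.le_ceil _
  have hm_up : (m : ℝ) ≤ ε * p / 3 + 1 := by
    have := Nat.ceil_lt_add_one (by positivity : (0:ℝ) ≤ ε * p / 3)
    rw [← hm] at this
    linarith
  have h2m : 2 * (m : ℝ) ≤ ε * p := by linarith
  have hm0 : 0 < m := by
    have : (0:ℝ) < ε * p / 3 := by positivity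
    exact Nat.ceil_pos.mpr this
  set K : ℕ := p / m with hK
  have hKm : K * m ≤ p := Nat.div_mul_le_self p m
  have hKm' : p < K * m + m := by
    have h1 := Nat.div_add_mod p m
    have h2 := Nat.mod_lt p hm0
    have h3 : K * m = m * (p / m) := by rw [hK, Nat.mul_comm]
    omega
  -- the fingerprint map
  set f : Finset U → (Fin K → V) := fun S j =>
    vert G (G.pathOf S) (chk G (G.pathOf S) ((j.val + 1) * m)) with hf
  set T : Set (Finset U) := {S ∈ G.labelFamily | S.card = p} with hT
  have hinj : Set.InjOn f T := by
    intro S₁ h₁ S₂ h₂ hfe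
    obtain ⟨hfam₁, hcard₁⟩ := h₁
    obtain ⟨hfam₂, hcard₂⟩ := h₂
    obtain ⟨hwalk₁, hlab₁⟩ := G.pathOf_spec hfam₁
    obtain ⟨hwalk₂, hlab₂⟩ := G.pathOf_spec hfam₂
    set A := G.pathOf S₁
    set B := G.pathOf S₂
    have hSA : (G.labelSet A).card = p := by rw [hlab₁, hcard₁]
    have hSB : (G.labelSet B).card = p := by rw [hlab₂, hcard₂]
    have hmatch : ∀ i, 1 ≤ i → i ≤ K →
        vert G A (chk G A (i * m)) = vert G B (chk G B (i * m)) := by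
      intro i hi1 hiK
      have hlt : i - 1 < K := by omega
      have := congrFun hfe ⟨i - 1, hlt⟩
      simp only [hf] at this
      have hieq : i - 1 + 1 = i := by omega
      rw [hieq] at this
      exact this
    have hsub₁ := prefix_subset hε hsep hp h2m hKm hwalk₁ hwalk₂ hSA hSB hmatch K le_rfl
    have hsub₂ := prefix_subset hε hsep hp h2m hKm hwalk₂ hwalk₁ hSB hSA
      (fun i hi1 hiK => (hmatch i hi1 hiK).symm) K le_rfl
    -- final comparison
    by_contra hne
    have hdiff1 : S₁ \ S₂ ⊆ S₁ \ G.labelSet (A.take (chk G A (K * m))) := by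
      intro u hu
      rw [Finset.mem_sdiff] at hu ⊢
      refine ⟨hu.1, fun hcon => hu.2 ?_⟩
      rw [← hlab₂]
      exact hsub₁ hcon
    have hdiff2 : S₂ \ S₁ ⊆ S₂ \ G.labelSet (B.take (chk G B (K * m))) := by
      intro u hu
      rw [Finset.mem_sdiff] at hu ⊢
      refine ⟨hu.1, fun hcon => hu.2 ?_⟩
      rw [← hlab₁]
      exact hsub₂ hcon
    have hc1 : (S₁ \ G.labelSet (A.take (chk G A (K * m)))).card = p - K * m := by
      rw [← hlab₁]
      rw [Finset.card_sdiff_of_subset (labelSet_take_subset G A _)]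
      rw [labelSet_take_chk_card G A _ (by omega), hSA]
    have hc2 : (S₂ \ G.labelSet (B.take (chk G B (K * m)))).card = p - K * m := by
      rw [← hlab₂]
      rw [Finset.card_sdiff_of_subset (labelSet_take_subset G B _)]
      rw [labelSet_take_chk_card G B _ (by omega), hSB]
    have hsymmc : ((symmDiff S₁ S₂).card : ℝ) ≤ 2 * m := by
      have h1 : (symmDiff S₁ S₂).card ≤ 2 * (p - K * m) := by
        rw [symmDiff_def]
        refine le_trans (Finset.card_union_le _ _) ?_
        have b1 := Finset.card_le_card hdiff1
        have b2 := Finset.card_le_card hdiff2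
        omega
      have h2 : (symmDiff S₁ S₂).card ≤ 2 * m := by omega
      exact_mod_cast h2
    have hmaxp : (max S₁.card S₂.card : ℕ) = p := by rw [hcard₁, hcard₂, max_self]
    have h6 : (6 : ℝ) ≤ ε * (max S₁.card S₂.card : ℕ) := by rw [hmaxp]; exact hp
    have hlt := hsep _ hfam₁ _ hfam₂ hne h6
    rw [hmaxp] at hlt
    nlinarith
  -- counting
  have hfinT : T.Finite := Set.toFinite T
  have hcount : T.ncard ≤ Fintype.card V ^ K := by
    calc T.ncard = (f '' T).ncard := (Set.ncard_image_of_injOn hinj).symm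
    _ ≤ (Set.univ : Set (Fin K → V)).ncard :=
        Set.ncard_le_ncard (Set.subset_univ _) Set.finite_univ
    _ = Nat.card (Fin K → V) := Set.ncard_univ _
    _ = Fintype.card V ^ K := by
        rw [Nat.card_eq_fintype_card, Fintype.card_fun, Fintype.card_fin]
  -- real arithmetic
  have hKreal : (K : ℝ) ≤ 3 / ε := by
    have h1 : (K : ℝ) * m ≤ p := by exact_mod_cast hKm
    have h2 : (K : ℝ) * (ε * p / 3) ≤ (K : ℝ) * m :=
      mul_le_mul_of_nonneg_left hm_low (Nat.cast_nonneg K)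
    have hpp : (0 : ℝ) < p := by exact_mod_cast hp0
    rw [le_div_iff₀ hε]
    nlinarith
  have h1V : (1 : ℝ) ≤ (Fintype.card V : ℝ) := by exact_mod_cast hn
  calc (T.ncard : ℝ) ≤ (Fintype.card V ^ K : ℕ) := by exact_mod_cast hcount
  _ = (Fintype.card V : ℝ) ^ (K : ℝ) := by
      rw [Real.rpow_natCast]
      exact_mod_cast rfl
  _ ≤ (Fintype.card V : ℝ) ^ ((3 : ℝ) / ε) :=
      Real.rpow_le_rpow_of_exponent_le h1V hKreal
end

section
/- Let C = D₀ ∧ … ∧ D_{m−1} be a CNF over Boolean variables x₁, …, x_n, where each clause D_j is a set of literals (i, α) ∈ {1,…,n} × {0,1}, and set S_{i,α} = {j ∈ [m] : (i, α) ∈ D_j}. Let G be the transition graph built from the sets S_{i,α} as described. Then F(G) = { ⋃_{i=1}^{n} S_{i,α(i)} : α a function from {1,…,n} to {0,1} }; consequently, C is satisfiable (some assignment α makes every clause contain a true literal) if and only if the full set [m] = {0,…,m−1} belongs to F(G). -/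
/-- `S_{i,α}`: the set of (indices of) clauses containing the literal `x_i^α`. -/
def clauseSets {n m : ℕ} (D : Fin m → Finset (Fin n × Bool)) (i : Fin n) (α : Bool) :
    Finset (Fin m) :=
  Finset.univ.filter (fun j => (i, α) ∈ D j)

/-- The number of edges on the path `P_{i,α}` (a single unlabeled edge if `S_{i,α} = ∅`). -/
def pathLen {n m : ℕ} (D : Fin m → Finset (Fin n × Bool)) (i : Fin n) (α : Bool) : ℕ :=
  max (clauseSets D i α).card 1

/-- Vertices of the transition graph built from the sets `S_{i,α}`:
the main vertices `x₀, …, x_n` together with the inner vertices of the paths `P_{i,α}`. -/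
def CnfVert (n m : ℕ) (D : Fin m → Finset (Fin n × Bool)) : Type :=
  Fin (n + 1) ⊕ (Σ i : Fin n, Σ α : Bool, Fin (pathLen D i α - 1))

/-- Edges of the transition graph: for each `i` and `α`, the consecutive edges of the
path `P_{i,α}` from `x_{i-1}` to `x_i`. -/
def CnfEdge (n m : ℕ) (D : Fin m → Finset (Fin n × Bool)) : Type :=
  Σ i : Fin n, Σ α : Bool, Fin (pathLen D i α)

/-- The transition graph built from the sets `S_{i,α}`, with `s = x₀`, `t = x_n`,
where the edges of `P_{i,α}` are bijectively labeled by the elements of `S_{i,α}`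
(a single unlabeled edge if `S_{i,α} = ∅`). -/
def cnfGraph (n m : ℕ) (D : Fin m → Finset (Fin n × Bool)) :
    TransitionGraph (CnfVert n m D) (CnfEdge n m D) (Fin m) where
  src := fun e =>
    if _ : (e.2.2 : ℕ) = 0 then Sum.inl e.1.castSucc
    else Sum.inr ⟨e.1, e.2.1, ⟨(e.2.2 : ℕ) - 1, by have := e.2.2.isLt; omega⟩⟩
  tgt := fun e =>
    if _ : (e.2.2 : ℕ) = pathLen D e.1 e.2.1 - 1 then Sum.inl e.1.succ
    else Sum.inr ⟨e.1, e.2.1, ⟨(e.2.2 : ℕ), by have := e.2.2.isLt; omega⟩⟩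
  s := Sum.inl 0
  t := Sum.inl (Fin.last n)
  lab := fun e => ((clauseSets D e.1 e.2.1).sort (· ≤ ·))[(e.2.2 : ℕ)]?


namespace TransitionGraph
variable {V E U : Type*}

/-- A path from `u` to `v`. -/
def GoodPath (G : TransitionGraph V E U) (u v : V) (P : List E) : Prop :=
  List.Chain' (fun e f => G.tgt e = G.src f) P ∧
    ((P = [] ∧ u = v) ∨
      ∃ h : P ≠ [], G.src (P.head h) = u ∧ G.tgt (P.getLast h) = v)

theorem isSTPath_iff (G : TransitionGraph V E U) (P : List E) :
    G.IsSTPath P ↔ G.GoodPath G.s G.t P := by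
  unfold IsSTPath GoodPath
  constructor <;> rintro ⟨hc, h | ⟨h1, h2, h3⟩⟩
  · exact ⟨hc, Or.inl ⟨h.1, h.2⟩⟩
  · exact ⟨hc, Or.inr ⟨h1, h2, h3⟩⟩
  · exact ⟨hc, Or.inl ⟨h.1, h.2⟩⟩
  · exact ⟨hc, Or.inr ⟨h1, h2, h3⟩⟩

theorem GoodPath.append {G : TransitionGraph V E U} {u v w : V} {P Q : List E}
    (hP : G.GoodPath u v P) (hQ : G.GoodPath v w Q) : G.GoodPath u w (P ++ Q) := by
  obtain ⟨hPc, hP⟩ := hP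
  obtain ⟨hQc, hQ⟩ := hQ
  rcases hP with ⟨rfl, rfl⟩ | ⟨hP0, hPs, hPt⟩
  · simpa [GoodPath] using ⟨hQc, hQ⟩
  rcases hQ with ⟨rfl, rfl⟩ | ⟨hQ0, hQs, hQt⟩
  · simpa [GoodPath] using ⟨hPc, Or.inr ⟨hP0, hPs, hPt⟩⟩
  refine ⟨List.isChain_append.2 ⟨hPc, hQc, ?_⟩, Or.inr ⟨by simp [hP0], ?_, ?_⟩⟩
  · intro x hx y hy
    rw [List.getLast?_eq_getLast hP0] at hx
    rw [List.head?_eq_head hQ0] at hy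
    simp only [Option.mem_def, Option.some.injEq] at hx hy
    subst hx; subst hy
    rw [hPt, hQs]
  · rw [List.head_append]
    simp [List.isEmpty_iff, hP0, hPs]
  · rw [List.getLast_append]
    simp [List.isEmpty_iff, hQ0, hQt]

end TransitionGraph


namespace CnfAux

variable {n m : ℕ} (D : Fin m → Finset (Fin n × Bool))

lemma pathLen_pos (i : Fin n) (α : Bool) : 0 < pathLen D i α :=
  lt_of_lt_of_le one_pos (le_max_right _ _)

lemma src_zero (i : Fin n) (α : Bool) (hk : 0 < pathLen D i α) :
    (cnfGraph n m D).src ⟨i, α, ⟨0, hk⟩⟩ = Sum.inl i.castSucc := rfl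

lemma src_ne (i : Fin n) (α : Bool) (k : ℕ) (hk : k < pathLen D i α) (h0 : k ≠ 0) :
    (cnfGraph n m D).src ⟨i, α, ⟨k, hk⟩⟩ = Sum.inr ⟨i, α, ⟨k - 1, by omega⟩⟩ := dif_neg h0

lemma tgt_last (i : Fin n) (α : Bool) (k : ℕ) (hk : k < pathLen D i α)
    (he : k = pathLen D i α - 1) :
    (cnfGraph n m D).tgt ⟨i, α, ⟨k, hk⟩⟩ = Sum.inl i.succ := dif_pos he

lemma tgt_ne (i : Fin n) (α : Bool) (k : ℕ) (hk : k < pathLen D i α)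
    (he : k ≠ pathLen D i α - 1) :
    (cnfGraph n m D).tgt ⟨i, α, ⟨k, hk⟩⟩ = Sum.inr ⟨i, α, ⟨k, by omega⟩⟩ := dif_neg he

/-- The tail of the path `P_{i,α}` starting from its `k`-th edge. -/
def segFrom (i : Fin n) (α : Bool) (k : ℕ) : List (CnfEdge n m D) :=
  ((List.range (pathLen D i α)).drop k).map
    (fun j => if h : j < pathLen D i α then ⟨i, α, ⟨j, h⟩⟩
      else ⟨i, α, ⟨0, pathLen_pos D i α⟩⟩)

lemma segFrom_length (i : Fin n) (α : Bool) (k : ℕ) :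
    (segFrom D i α k).length = pathLen D i α - k := by
  simp [segFrom]

lemma segFrom_getElem (i : Fin n) (α : Bool) (k j : ℕ) (hj : j < (segFrom D i α k).length) :
    (segFrom D i α k)[j] = ⟨i, α, ⟨k + j, by
      rw [segFrom_length] at hj; omega⟩⟩ := by
  have hj' := hj
  rw [segFrom_length] at hj'
  simp only [segFrom, List.getElem_map, List.getElem_drop, List.getElem_range]
  exact dif_pos (by simp; omega)

lemma segFrom_cons (i : Fin n) (α : Bool) (k : ℕ) (hk : k < pathLen D i α) :
    segFrom D i α k = ⟨i, α, ⟨k, hk⟩⟩ :: segFrom D i α (k + 1) := by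
  unfold segFrom
  rw [List.drop_eq_getElem_cons (by simpa using hk), List.map_cons, List.getElem_range]
  exact congrArg (· :: _) (dif_pos hk)

lemma segFrom_nil (i : Fin n) (α : Bool) (k : ℕ) (hk : pathLen D i α ≤ k) :
    segFrom D i α k = [] := by
  unfold segFrom
  rw [List.drop_eq_nil_of_le (by simpa using hk), List.map_nil]

lemma range_filterMap_getElem {γ : Type*} (l : List γ) :
    ∀ L : ℕ, (List.range L).filterMap (fun k => l[k]?) = l.take L := by
  intro L
  induction L with
  | zero => simp
  | succ L ih =>
    rw [List.range_succ, List.filterMap_append, ih, List.take_succ]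
    cases h : l[L]? <;> simp [List.filterMap_cons, h]

lemma labelSeg (i : Fin n) (α : Bool) :
    ((segFrom D i α 0).filterMap (cnfGraph n m D).lab).toFinset = clauseSets D i α := by
  unfold segFrom
  rw [List.drop_zero, List.filterMap_map]
  have : ∀ x ∈ List.range (pathLen D i α),
      ((cnfGraph n m D).lab ∘ (fun j => if h : j < pathLen D i α then
        (⟨i, α, ⟨j, h⟩⟩ : CnfEdge n m D)
        else ⟨i, α, ⟨0, pathLen_pos D i α⟩⟩)) x
      = ((clauseSets D i α).sort (· ≤ ·))[x]? := by
    intro x hx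
    rw [List.mem_range] at hx
    exact (congrArg (cnfGraph n m D).lab (dif_pos hx)).trans rfl
  rw [List.filterMap_congr this, range_filterMap_getElem,
    List.take_of_length_le (by rw [Finset.length_sort]; exact le_max_left _ _),
    Finset.sort_toFinset]

lemma forced (i : Fin n) (α : Bool) :
    ∀ (P : List (CnfEdge n m D)) (k : ℕ) (hk : k < pathLen D i α),
    List.Chain' (fun e f => (cnfGraph n m D).tgt e = (cnfGraph n m D).src f)
      (⟨i, α, ⟨k, hk⟩⟩ :: P) →
    (cnfGraph n m D).tgt ((⟨i, α, ⟨k, hk⟩⟩ :: P).getLast (by simp)) = Sum.inl (Fin.last n) →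
    ∃ Q, (⟨i, α, ⟨k, hk⟩⟩ :: P : List (CnfEdge n m D)) = segFrom D i α k ++ Q ∧
      (cnfGraph n m D).GoodPath (Sum.inl i.succ) (Sum.inl (Fin.last n)) Q := by
  intro P
  induction P with
  | nil =>
    intro k hk _ hlast
    rcases eq_or_ne k (pathLen D i α - 1) with he | he
    · refine ⟨[], by rw [segFrom_cons D i α k hk, segFrom_nil D i α (k+1) (by omega), List.append_nil], ?_, ?_⟩
      · exact List.isChain_nil
      · refine Or.inl ⟨rfl, ?_⟩
        exact (tgt_last D i α k hk he).symm.trans hlast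
    · exfalso
      cases (tgt_ne D i α k hk he).symm.trans hlast
  | cons f P' ih =>
    intro k hk hchain hlast
    have hchain' : List.Chain' (fun e f => (cnfGraph n m D).tgt e = (cnfGraph n m D).src f)
        (f :: P') := hchain.tail
    have hef : (cnfGraph n m D).tgt ⟨i, α, ⟨k, hk⟩⟩ = (cnfGraph n m D).src f :=
      List.isChain_cons_cons.1 hchain |>.1
    have hlast' : (cnfGraph n m D).tgt ((f :: P').getLast (by simp)) = Sum.inl (Fin.last n) := by
      exact hlast
    rcases eq_or_ne k (pathLen D i α - 1) with he | he
    · refine ⟨f :: P', by simp [segFrom_cons D i α k hk, segFrom_nil D i α (k+1) (by omega)]; rfl, ?_,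
        Or.inr ⟨by simp, ?_, hlast'⟩⟩
      · exact hchain'
      · rw [List.head_cons, ← hef]
        exact tgt_last D i α k hk he
    · -- k < pathLen - 1; the next edge is forced
      obtain ⟨i', α', k', hk'⟩ := f
      have hef' : (Sum.inr ⟨i, α, ⟨k, by omega⟩⟩ : CnfVert n m D) = (cnfGraph n m D).src ⟨i', α', ⟨k', hk'⟩⟩ := by
        rw [← hef]
        exact (tgt_ne D i α k hk he).symm
      by_cases h0 : k' = 0
      · exfalso
        subst h0
        cases hef'.trans (src_zero D i' α' hk')
      · replace hef' := hef'.trans (src_ne D i' α' k' hk' h0)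
        have hsum := Sum.inr.inj hef'
        obtain ⟨h1, h2⟩ := Sigma.mk.inj_iff.1 hsum
        subst h1
        obtain ⟨h3, h4⟩ := Sigma.mk.inj_iff.1 (eq_of_heq h2)
        subst h3
        have hkk : k' = k + 1 := by
          have hv : k = k' - 1 := congrArg Fin.val (eq_of_heq h4)
          omega
        subst hkk
        obtain ⟨Q, hQeq, hQgood⟩ := ih (k + 1) hk' hchain' hlast'
        exact ⟨Q, by rw [segFrom_cons D i α k hk]; exact congrArg (_ :: ·) hQeq, hQgood⟩

lemma filter_last_empty :
    (Finset.univ.filter fun j : Fin n => Fin.last n ≤ j.castSucc) = ∅ := by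
  ext j
  simp only [Finset.mem_filter, Finset.mem_univ, true_and, Finset.notMem_empty, iff_false]
  intro h
  rw [Fin.le_def] at h
  simp only [Fin.val_last, Fin.coe_castSucc] at h
  have := j.isLt
  omega

lemma filter_insert (i : Fin n) :
    (Finset.univ.filter fun j : Fin n => i.castSucc ≤ j.castSucc)
      = insert i (Finset.univ.filter fun j : Fin n => i.succ ≤ j.castSucc) := by
  ext j
  simp only [Finset.mem_filter, Finset.mem_univ, true_and, Finset.mem_insert]
  rw [Fin.le_def, Fin.le_def, Fin.ext_iff]
  simp only [Fin.coe_castSucc, Fin.val_succ]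
  omega

lemma decompose : ∀ (N : ℕ) (P : List (CnfEdge n m D)), P.length ≤ N →
    ∀ v : Fin (n + 1),
    (cnfGraph n m D).GoodPath (Sum.inl v) (Sum.inl (Fin.last n)) P →
    ∃ β : Fin n → Bool,
      (P.filterMap (cnfGraph n m D).lab).toFinset =
        (Finset.univ.filter fun i : Fin n => v ≤ i.castSucc).biUnion
          (fun i => clauseSets D i (β i)) := by
  intro N
  induction N with
  | zero =>
    intro P hlen v hgood
    have hP : P = [] := List.length_eq_zero_iff.1 (Nat.le_zero.1 hlen)
    subst hP
    rcases hgood.2 with ⟨-, hv⟩ | ⟨h, -⟩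
    · obtain rfl : v = Fin.last n := Sum.inl.inj hv
      refine ⟨fun _ => false, ?_⟩
      rw [filter_last_empty]
      simp
    · exact absurd rfl h
  | succ N ih =>
    intro P hlen v hgood
    obtain ⟨hchain, hP⟩ := hgood
    rcases hP with ⟨rfl, hv⟩ | ⟨hne, hs, ht⟩
    · obtain rfl : v = Fin.last n := Sum.inl.inj hv
      refine ⟨fun _ => false, ?_⟩
      rw [filter_last_empty]
      simp
    · obtain ⟨e, P', rfl⟩ := List.exists_cons_of_ne_nil hne
      obtain ⟨i, α, k, hk⟩ := e
      change (cnfGraph n m D).src ⟨i, α, ⟨k, hk⟩⟩ = Sum.inl v at hs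
      by_cases h0 : k = 0
      · subst h0
        replace hs := (src_zero D i α hk).symm.trans hs
        have hv : i.castSucc = v := Sum.inl.inj hs
        obtain ⟨Q, hQeq, hQgood⟩ := forced D i α P' 0 (pathLen_pos D i α) hchain ht
        have hQlen : Q.length ≤ N := by
          have h1 := congrArg List.length hQeq
          rw [List.length_append, segFrom_length] at h1
          have h2 := pathLen_pos D i α
          replace h1 : P'.length + 1 = pathLen D i α - 0 + Q.length := h1
          replace hlen : P'.length + 1 ≤ N + 1 := hlen
          omega
        obtain ⟨β', hβ'⟩ := ih Q hQlen i.succ hQgood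
        refine ⟨Function.update β' i α, ?_⟩
        rw [hQeq, List.filterMap_append, List.toFinset_append, labelSeg, hβ', ← hv,
          filter_insert, Finset.biUnion_insert]
        congr 1
        · rw [Function.update_self]
        · refine Finset.biUnion_congr rfl (fun j hj => ?_)
          rw [Function.update_of_ne]
          simp only [Finset.mem_filter, Finset.mem_univ, true_and] at hj
          rw [Fin.le_def] at hj
          simp only [Fin.val_succ, Fin.coe_castSucc] at hj
          intro hji
          rw [Fin.ext_iff] at hji
          omega
      · replace hs := (src_ne D i α k hk h0).symm.trans hs
        cases hs

lemma segFrom_zero_getElem (i : Fin n) (α : Bool) (j : ℕ)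
    (hj : j < (segFrom D i α 0).length) :
    (segFrom D i α 0)[j] = ⟨i, α, ⟨j, by rw [segFrom_length] at hj; omega⟩⟩ := by
  rw [segFrom_getElem]
  simp
  rfl

lemma segGood (i : Fin n) (α : Bool) :
    (cnfGraph n m D).GoodPath (Sum.inl i.castSucc) (Sum.inl i.succ) (segFrom D i α 0) := by
  have hlen : (segFrom D i α 0).length = pathLen D i α := by
    rw [segFrom_length]; omega
  have hne : segFrom D i α 0 ≠ [] := by
    rw [← List.length_pos_iff]
    rw [hlen]
    exact pathLen_pos D i α
  refine ⟨?_, Or.inr ⟨hne, ?_, ?_⟩⟩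
  · refine List.isChain_iff_getElem.2 ?_
    intro j hj
    rw [segFrom_zero_getElem D i α j (by omega), segFrom_zero_getElem D i α (j+1) (by omega)]
    rw [hlen] at hj
    exact (tgt_ne D i α j _ (by omega)).trans (src_ne D i α (j+1) _ (by omega)).symm
  · rw [List.head_eq_getElem, segFrom_zero_getElem D i α 0 (by rw [hlen]; exact pathLen_pos D i α)]
    simp [cnfGraph]
    rfl
  · rw [List.getLast_eq_getElem,
      segFrom_zero_getElem D i α _ (by rw [hlen]; have := pathLen_pos D i α; omega)]
    simp [cnfGraph, hlen]
    rfl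

lemma build (β : Fin n → Bool) : ∀ (N : ℕ) (v : Fin (n + 1)), n ≤ v + N →
    ∃ P, (cnfGraph n m D).GoodPath (Sum.inl v) (Sum.inl (Fin.last n)) P ∧
      (P.filterMap (cnfGraph n m D).lab).toFinset =
        (Finset.univ.filter fun i : Fin n => v ≤ i.castSucc).biUnion
          (fun i => clauseSets D i (β i)) := by
  intro N
  induction N with
  | zero =>
    intro v hv
    have hvl : v = Fin.last n := Fin.ext (le_antisymm (Nat.lt_succ_iff.1 v.isLt) (by simpa using hv))
    subst hvl
    exact ⟨[], ⟨List.isChain_nil, Or.inl ⟨rfl, rfl⟩⟩, by rw [filter_last_empty]; simp⟩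
  | succ N ih =>
    intro v hv
    by_cases hvn : (v : ℕ) = n
    · have hvl : v = Fin.last n := Fin.ext hvn
      subst hvl
      exact ⟨[], ⟨List.isChain_nil, Or.inl ⟨rfl, rfl⟩⟩, by rw [filter_last_empty]; simp⟩
    · have hlt : (v : ℕ) < n := by have := v.isLt; omega
      set i : Fin n := ⟨v, hlt⟩ with hi
      have hcs : i.castSucc = v := Fin.ext rfl
      obtain ⟨P', hgood', hlab'⟩ := ih i.succ (by have : (i : ℕ) = v := rfl; simp only [Fin.val_succ]; omega)
      refine ⟨segFrom D i (β i) 0 ++ P', ?_, ?_⟩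
      · have h := (segGood D i (β i)).append hgood'
        rwa [hcs] at h
      · rw [List.filterMap_append, List.toFinset_append, labelSeg, hlab', ← hcs,
          filter_insert, Finset.biUnion_insert]


end CnfAux

theorem stmt7 {n m : ℕ} (D : Fin m → Finset (Fin n × Bool)) :
    (cnfGraph n m D).labelFamily =
      {S : Finset (Fin m) | ∃ β : Fin n → Bool,
        S = Finset.univ.biUnion (fun i => clauseSets D i (β i))} ∧
    ((∃ β : Fin n → Bool, ∀ j : Fin m, ∃ l ∈ D j, β l.1 = l.2) ↔
      (Finset.univ : Finset (Fin m)) ∈ (cnfGraph n m D).labelFamily) := by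
  have hfam : (cnfGraph n m D).labelFamily =
      {S : Finset (Fin m) | ∃ β : Fin n → Bool,
        S = Finset.univ.biUnion (fun i => clauseSets D i (β i))} := by
    have hfilter : (Finset.univ.filter fun i : Fin n => (0 : Fin (n+1)) ≤ i.castSucc)
        = Finset.univ := by
      ext j
      simp [Fin.zero_le]
    ext S
    simp only [TransitionGraph.labelFamily, Set.mem_setOf_eq]
    constructor
    · rintro ⟨P, hP, rfl⟩
      rw [TransitionGraph.isSTPath_iff] at hP
      have hP' : (cnfGraph n m D).GoodPath (Sum.inl 0) (Sum.inl (Fin.last n)) P := hP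
      obtain ⟨β, hβ⟩ := CnfAux.decompose D P.length P le_rfl 0 hP'
      refine ⟨β, ?_⟩
      rw [TransitionGraph.labelSet, hβ, hfilter]
    · rintro ⟨β, rfl⟩
      obtain ⟨P, hgood, hlab⟩ := CnfAux.build D β n 0 (by simp)
      refine ⟨P, ?_, ?_⟩
      · rw [TransitionGraph.isSTPath_iff]
        exact hgood
      · rw [TransitionGraph.labelSet, hlab, hfilter]
  refine ⟨hfam, ?_⟩
  rw [hfam]
  simp only [Set.mem_setOf_eq]
  constructor
  · rintro ⟨β, hβ⟩
    refine ⟨β, (Finset.eq_univ_iff_forall.2 fun j => ?_).symm⟩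
    obtain ⟨l, hl, hβl⟩ := hβ j
    rw [Finset.mem_biUnion]
    refine ⟨l.1, Finset.mem_univ _, ?_⟩
    simp only [clauseSets, Finset.mem_filter, Finset.mem_univ, true_and, hβl]
    exact hl
  · rintro ⟨β, hβ⟩
    refine ⟨β, fun j => ?_⟩
    have hj : j ∈ Finset.univ.biUnion (fun i => clauseSets D i (β i)) :=
      hβ ▸ Finset.mem_univ j
    rw [Finset.mem_biUnion] at hj
    obtain ⟨i, -, hi⟩ := hj
    simp only [clauseSets, Finset.mem_filter, Finset.mem_univ, true_and] at hi
    exact ⟨(i, β i), hi, rfl⟩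
end

section
/- Let A be a trimmed NFA over the alphabet ℕ. Suppose there exist states q₁, q₂ such that the set {x ∈ ℕ : q₂ ∈ step(q₁, x)} is infinite and q₁ is reachable from q₂ (there exists a word v with q₁ ∈ evalFrom({q₂}, v)), i.e., the transition from q₁ to q₂ lies on a cycle. Then there exists N ∈ ℕ such that for every t ∈ ℕ there is a word w accepted by A whose content has cardinality exactly N + t. -/
/-- An NFA is trimmed if every state lies on an accepting run. -/
def Trimmed {α σ : Type*} (M : NFA α σ) : Prop :=
  ∀ q : σ, ∃ u v : List α,
    q ∈ M.evalFrom M.start u ∧ (M.evalFrom {q} v ∩ M.accept).Nonempty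

lemma evalFrom_append' {α σ : Type*} (M : NFA α σ) (S : Set σ) (a b : List α) :
    M.evalFrom S (a ++ b) = M.evalFrom (M.evalFrom S a) b :=
  List.foldl_append

lemma stepSet_mono' {α σ : Type*} (M : NFA α σ) {S T : Set σ} (h : S ⊆ T) (a : α) :
    M.stepSet S a ⊆ M.stepSet T a := by
  intro x hx
  rw [NFA.mem_stepSet] at hx ⊢
  obtain ⟨t, ht, hx⟩ := hx
  exact ⟨t, h ht, hx⟩

lemma evalFrom_mono' {α σ : Type*} (M : NFA α σ) {S T : Set σ} (h : S ⊆ T) (a : List α) :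
    M.evalFrom S a ⊆ M.evalFrom T a := by
  induction a generalizing S T with
  | nil => exact h
  | cons x xs ih => exact ih (stepSet_mono' M h x)

lemma flat_toFinset (v : List ℕ) : ∀ (L : List ℕ), L ≠ [] →
    (L.flatMap (fun x => x :: v)).toFinset = L.toFinset ∪ v.toFinset
  | [], h => absurd rfl h
  | x :: xs, _ => by
    rcases eq_or_ne xs [] with rfl | h
    · simp
    · rw [List.flatMap_cons, List.toFinset_append, flat_toFinset v xs h]
      simp only [List.toFinset_cons, Finset.insert_eq]
      ac_rfl

theorem stmt10 {σ : Type*} (M : NFA ℕ σ) (hT : Trimmed M)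
    (q₁ q₂ : σ) (hinf : {x : ℕ | q₂ ∈ M.step q₁ x}.Infinite)
    (v : List ℕ) (hv : q₁ ∈ M.evalFrom {q₂} v) :
    ∃ N : ℕ, ∀ t : ℕ, ∃ w ∈ M.accepts, w.toFinset.card = N + t := by
  obtain ⟨u, z, hu, qf, hqf, hacc⟩ := hT q₁
  set S : Finset ℕ := (u ++ v ++ z).toFinset with hS
  refine ⟨S.card + 1, fun t => ?_⟩
  -- pick t+1 fresh letters in the infinite set
  obtain ⟨T, hTsub, hTcard⟩ :=
    ((hinf.diff S.finite_toSet).exists_subset_card_eq (t + 1))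
  -- the loop word from a list of letters
  let f : List ℕ → List ℕ := fun L => L.flatMap (fun x => x :: v)
  -- key loop lemma
  have hloop : ∀ L : List ℕ, (∀ x ∈ L, q₂ ∈ M.step q₁ x) →
      q₁ ∈ M.evalFrom {q₁} (f L) := by
    intro L
    induction L with
    | nil => intro _; exact rfl
    | cons x xs ih =>
      intro hmem
      have : f (x :: xs) = (x :: v) ++ f xs := by simp [f]
      rw [this, evalFrom_append']
      refine evalFrom_mono' M ?_ (f xs) (ih fun y hy => hmem y (List.mem_cons_of_mem _ hy))
      rw [Set.singleton_subset_iff]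
      show q₁ ∈ M.evalFrom (M.stepSet {q₁} x) v
      refine evalFrom_mono' M (Set.singleton_subset_iff.mpr ?_) v hv
      rw [NFA.mem_stepSet]
      exact ⟨q₁, rfl, hmem x List.mem_cons_self⟩
  set L := T.toList with hL
  have hLmem : ∀ x ∈ L, x ∈ T := fun x hx => Finset.mem_toList.mp hx
  have hq1 : q₁ ∈ M.evalFrom {q₁} (f L) :=
    hloop L fun x hx => (hTsub (hLmem x hx)).1
  refine ⟨u ++ f L ++ z, ?_, ?_⟩
  · rw [NFA.mem_accepts]
    refine ⟨qf, hacc, ?_⟩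
    rw [evalFrom_append', evalFrom_append']
    refine evalFrom_mono' M ?_ z hqf
    intro s hs
    rcases hs with rfl
    exact evalFrom_mono' M (Set.singleton_subset_iff.mpr hu) (f L) hq1
  · have hLne : L ≠ [] := by
      intro h
      have : T.card = 0 := by rw [← Finset.length_toList, ← hL, h]; rfl
      omega
    have hfL : (f L).toFinset = L.toFinset ∪ v.toFinset :=
      flat_toFinset v L hLne
    have hLT : L.toFinset = T := Finset.toList_toFinset T
    have : (u ++ f L ++ z).toFinset = S ∪ T := by
      simp only [List.toFinset_append, hfL, hLT, hS]
      ac_rfl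
    rw [this, Finset.card_union_of_disjoint, hTcard]
    · omega
    · rw [Finset.disjoint_left]
      intro a ha haT
      exact (hTsub haT).2 ha
end
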